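/- Let U be a finite set, let F be a finite family of subsets of U, let X ⊆ U, and let t be a natural number. Then X is t-covered by F (i.e., there exist F_1, ..., F_t ∈ F with X ⊆ F_1 ∪ ... ∪ F_t) if and only if Σ_{Y ⊆ X} (−1)^{|X \ Y|} · c(Y)^t > 0, where c(Y) = |{I ⊆ Y : there exists F ∈ F with I ⊆ F}| counts the subsets of Y that are contained in some member of F, and the sum is taken over all subsets Y of X as an integer. -/
import Mathlib

open Finset

private lemma aux_sum_empty {α : Type*} [DecidableEq α] (W : Finset α) :
    ∑ Z ∈ W.powerset, (-1 : ℤ) ^ (W \ Z).card = if W = ∅ then 1 else 0 := by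
  have h : ∀ Z ∈ W.powerset, (-1 : ℤ) ^ (W \ Z).card = (-1) ^ W.card * (-1) ^ Z.card := by
    intro Z hZ
    rw [mem_powerset] at hZ
    rw [card_sdiff_of_subset hZ]
    have hc : Z.card ≤ W.card := card_le_card hZ
    have h2 : ((-1 : ℤ) ^ Z.card) * ((-1 : ℤ) ^ Z.card) = 1 := by
      rw [← pow_add, ← two_mul, pow_mul]; norm_num
    calc (-1 : ℤ) ^ (W.card - Z.card)
        = (-1 : ℤ) ^ (W.card - Z.card) * (((-1 : ℤ) ^ Z.card) * ((-1 : ℤ) ^ Z.card)) := by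
          rw [h2, mul_one]
      _ = ((-1 : ℤ) ^ (W.card - Z.card) * (-1 : ℤ) ^ Z.card) * (-1 : ℤ) ^ Z.card := by ring
      _ = (-1 : ℤ) ^ W.card * (-1 : ℤ) ^ Z.card := by
          rw [← pow_add, Nat.sub_add_cancel hc]
  rw [Finset.sum_congr rfl h, ← Finset.mul_sum, Finset.sum_powerset_neg_one_pow_card]
  split_ifs with hW
  · subst hW; simp
  · simp

private lemma aux_sum {α : Type*} [DecidableEq α] (X S : Finset α) (hS : S ⊆ X) :
    ∑ Y ∈ X.powerset, (if S ⊆ Y then (-1 : ℤ) ^ (X \ Y).card else 0)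
      = if S = X then 1 else 0 := by
  rw [← Finset.sum_filter]
  have hbij : ∑ Y ∈ X.powerset.filter (fun Y => S ⊆ Y), (-1 : ℤ) ^ (X \ Y).card
      = ∑ Z ∈ (X \ S).powerset, (-1 : ℤ) ^ ((X \ S) \ Z).card := by
    apply Finset.sum_nbij' (fun Y => Y \ S) (fun Z => Z ∪ S)
    · intro Y hY
      simp only [mem_filter, mem_powerset] at hY
      rw [mem_powerset]
      exact sdiff_subset_sdiff hY.1 (le_refl _)
    · intro Z hZ
      rw [mem_powerset] at hZ
      simp only [mem_filter, mem_powerset]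
      exact ⟨union_subset (hZ.trans sdiff_subset) hS, subset_union_right⟩
    · intro Y hY
      simp only [mem_filter, mem_powerset] at hY
      rw [sdiff_union_of_subset hY.2]
    · intro Z hZ
      rw [mem_powerset] at hZ
      ext x
      simp only [mem_sdiff, mem_union]
      constructor
      · rintro ⟨hx | hx, hxs⟩
        · exact hx
        · exact absurd hx hxs
      · intro hx
        exact ⟨Or.inl hx, (mem_sdiff.mp (hZ hx)).2⟩
    · intro Y hY
      simp only [mem_filter, mem_powerset] at hY
      have : X \ Y = (X \ S) \ (Y \ S) := by
        ext x
        simp only [mem_sdiff]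
        constructor
        · rintro ⟨hx, hxy⟩
          exact ⟨⟨hx, fun h => hxy (hY.2 h)⟩, fun h => hxy h.1⟩
        · rintro ⟨⟨hx, hxs⟩, hxy⟩
          exact ⟨hx, fun h => hxy ⟨h, hxs⟩⟩
      rw [this]
  have hiff : (X \ S = ∅) ↔ (S = X) := by
    rw [sdiff_eq_empty_iff_subset]
    exact ⟨fun h => subset_antisymm hS h, fun h => h ▸ le_refl _⟩
  rw [hbij, aux_sum_empty, if_congr hiff rfl rfl]

/-- `X` is `t`-covered by `F` if and only if the inclusion–exclusion expression
`Σ_{Y ⊆ X} (-1)^{|X \ Y|} c(Y)^t` is positive, where `c(Y)` counts the subsets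
of `Y` contained in some member of `F`. -/
theorem stmt8 {α : Type*} [Fintype α] [DecidableEq α]
    (F : Finset (Finset α)) (X : Finset α) (t : ℕ) :
    (∃ f : Fin t → Finset α, (∀ i, f i ∈ F) ∧ X ⊆ Finset.univ.biUnion f)
      ↔ 0 < ∑ Y ∈ X.powerset,
          (-1) ^ (X \ Y).card *
            (({I : Finset α | I ⊆ Y ∧ ∃ A ∈ F, I ⊆ A}.ncard : ℤ)) ^ t := by
  classical
  set good : Finset α → Prop := fun I => ∃ A ∈ F, I ⊆ A with hgood
  -- rewrite ncard as a Finset card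
  have hset : ∀ Y : Finset α, {I : Finset α | I ⊆ Y ∧ ∃ A ∈ F, I ⊆ A}.ncard
      = (Y.powerset.filter good).card := by
    intro Y
    rw [show {I : Finset α | I ⊆ Y ∧ ∃ A ∈ F, I ⊆ A}
        = ↑(Y.powerset.filter good) by ext I; simp [hgood]]
    exact Set.ncard_coe_finset _
  set T : Finset (Fin t → Finset α) :=
    Fintype.piFinset (fun _ => X.powerset.filter good) with hT
  have key : ∀ Y ∈ X.powerset,
      ((Y.powerset.filter good).card : ℤ) ^ t
        = ∑ g ∈ T, (if Finset.univ.biUnion g ⊆ Y then (1 : ℤ) else 0) := by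
    intro Y hY
    rw [mem_powerset] at hY
    rw [Finset.sum_boole]
    have : T.filter (fun g => Finset.univ.biUnion g ⊆ Y)
        = Fintype.piFinset (fun _ : Fin t => Y.powerset.filter good) := by
      ext g
      simp only [hT, mem_filter, Fintype.mem_piFinset, mem_powerset, Finset.biUnion_subset,
        mem_univ, forall_const]
      constructor
      · rintro ⟨h1, h2⟩ i
        exact ⟨h2 i, (h1 i).2⟩
      · intro h
        exact ⟨fun i => ⟨(h i).1.trans hY, (h i).2⟩, fun i => (h i).1⟩
    rw [this, Fintype.card_piFinset]
    simp
  have hsum : ∑ Y ∈ X.powerset,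
      (-1 : ℤ) ^ (X \ Y).card * (({I : Finset α | I ⊆ Y ∧ ∃ A ∈ F, I ⊆ A}.ncard : ℤ)) ^ t
      = ((T.filter (fun g => Finset.univ.biUnion g = X)).card : ℤ) := by
    calc ∑ Y ∈ X.powerset,
        (-1 : ℤ) ^ (X \ Y).card * (({I : Finset α | I ⊆ Y ∧ ∃ A ∈ F, I ⊆ A}.ncard : ℤ)) ^ t
        = ∑ Y ∈ X.powerset, ∑ g ∈ T,
            (if Finset.univ.biUnion g ⊆ Y then (-1 : ℤ) ^ (X \ Y).card else 0) := by
          apply Finset.sum_congr rfl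
          intro Y hY
          rw [hset Y, key Y hY, Finset.mul_sum]
          apply Finset.sum_congr rfl
          intro g _
          split_ifs <;> ring
      _ = ∑ g ∈ T, ∑ Y ∈ X.powerset,
            (if Finset.univ.biUnion g ⊆ Y then (-1 : ℤ) ^ (X \ Y).card else 0) :=
          Finset.sum_comm
      _ = ∑ g ∈ T, (if Finset.univ.biUnion g = X then (1 : ℤ) else 0) := by
          apply Finset.sum_congr rfl
          intro g hg
          apply aux_sum
          rw [Finset.biUnion_subset]
          intro i _
          have := (Fintype.mem_piFinset.mp hg) i
          rw [mem_filter, mem_powerset] at this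
          exact this.1
      _ = _ := by rw [Finset.sum_boole]
  rw [hsum]
  rw [Int.natCast_pos, Finset.card_pos]
  constructor
  · rintro ⟨f, hf, hX⟩
    refine ⟨fun i => X ∩ f i, ?_⟩
    rw [mem_filter]
    constructor
    · rw [hT, Fintype.mem_piFinset]
      intro i
      rw [mem_filter, mem_powerset]
      exact ⟨inter_subset_left, ⟨f i, hf i, inter_subset_right⟩⟩
    · apply subset_antisymm
      · rw [Finset.biUnion_subset]
        intro i _
        exact inter_subset_left
      · intro x hx
        rw [Finset.mem_biUnion]
        obtain ⟨i, _, hxi⟩ := Finset.mem_biUnion.mp (hX hx)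
        exact ⟨i, mem_univ i, mem_inter.mpr ⟨hx, hxi⟩⟩
  · rintro ⟨g, hg⟩
    rw [mem_filter] at hg
    obtain ⟨hgT, hgX⟩ := hg
    rw [hT, Fintype.mem_piFinset] at hgT
    have hchoice : ∀ i, ∃ A ∈ F, g i ⊆ A := by
      intro i
      have := hgT i
      rw [mem_filter] at this
      exact this.2
    choose A hA hAg using hchoice
    refine ⟨A, hA, ?_⟩
    rw [← hgX]
    intro x hx
    rw [Finset.mem_biUnion] at hx ⊢
    obtain ⟨i, _, hxi⟩ := hx
    exact ⟨i, mem_univ i, hAg i hxi⟩
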